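/- Let d ≥ 2, let ν be a positive odd integer, and let x₁, …, xₙ ∈ ℝ^d be pairwise distinct points. Then the functions φ_j(x) = ‖x − x_j‖₂^ν, j = 1, …, n, are linearly independent as functions on any open connected set Ω ⊆ ℝ^d containing all the x_j. -/

import Mathlib

lemma analyticAt_sqrt' {x : ℝ} (hx : 0 < x) : AnalyticAt ℝ Real.sqrt x := by
  have h1 : AnalyticAt ℝ (fun y : ℝ => ((y : ℂ) ^ (1/2 : ℂ)).re) x := by
    have hc : AnalyticAt ℂ (fun z : ℂ => z ^ (1/2 : ℂ)) (x : ℂ) :=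
      (analyticAt_id).cpow analyticAt_const (by
        simp [Complex.mem_slitPlane_iff, hx])
    exact (Complex.reCLM.analyticAt _).comp
      ((hc.restrictScalars (𝕜 := ℝ)).comp (Complex.ofRealCLM.analyticAt x))
  apply h1.congr
  filter_upwards [eventually_gt_nhds hx] with y hy
  rw [show ((y : ℂ) ^ (1/2 : ℂ)) = ((y ^ (1/2 : ℝ) : ℝ) : ℂ) by
    rw [Complex.ofReal_cpow hy.le]; norm_num]
  simp [Real.sqrt_eq_rpow]

lemma analyticAt_norm' {d : ℕ} {z : EuclideanSpace ℝ (Fin d)} (hz : z ≠ 0) :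
    AnalyticAt ℝ (fun y : EuclideanSpace ℝ (Fin d) => ‖y‖) z := by
  have hs : AnalyticAt ℝ (fun y : EuclideanSpace ℝ (Fin d) => ∑ i, y i ^ 2) z :=
    Finset.analyticAt_fun_sum _ (fun i _ =>
      ((EuclideanSpace.proj i (𝕜 := ℝ)).analyticAt z).pow 2)
  have hpos : 0 < ∑ i, z i ^ 2 := by
    obtain ⟨i, hi⟩ : ∃ i, z i ≠ 0 := by
      by_contra h
      push_neg at h
      exact hz (PiLp.ext h)
    exact Finset.sum_pos' (fun j _ => sq_nonneg _)
      ⟨i, Finset.mem_univ i, by positivity⟩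
  have h2 := AnalyticAt.comp (f := fun y : EuclideanSpace ℝ (Fin d) => ∑ i, y i ^ 2)
    (x := z) (analyticAt_sqrt' hpos) hs
  apply h2.congr
  filter_upwards with y
  simp [EuclideanSpace.norm_eq, Real.norm_eq_abs, sq_abs, Function.comp]

theorem radial_powers_linearly_independent {d n : ℕ} (hd : 2 ≤ d)
    (ν : ℕ) (hν : Odd ν) (hνpos : 0 < ν)
    (Ω : Set (EuclideanSpace ℝ (Fin d))) (hΩo : IsOpen Ω) (hΩc : IsConnected Ω)
    (x : Fin n → EuclideanSpace ℝ (Fin d)) (hxΩ : ∀ j, x j ∈ Ω)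
    (hdist : Function.Injective x)
    (c : Fin n → ℝ)
    (hc : ∀ y ∈ Ω, ∑ j, c j * ‖y - x j‖ ^ ν = 0) :
    c = 0 := by
  classical
  funext i
  show c i = 0
  obtain ⟨δ, hδpos, hball⟩ := Metric.isOpen_iff.mp hΩo (x i) (hxΩ i)
  obtain ⟨r, hr0, hrδ, hrd⟩ : ∃ r > 0, r ≤ δ ∧ ∀ j, j ≠ i → r < dist (x i) (x j) := by
    by_cases hs : (Finset.univ.erase i).Nonempty
    · set m := (Finset.univ.erase i).inf' hs (fun j => dist (x i) (x j)) with hm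
      have hmpos : 0 < m := by
        rw [hm, Finset.lt_inf'_iff]
        intro j hj
        exact dist_pos.mpr (fun h => (Finset.mem_erase.mp hj).1 (hdist h.symm))
      refine ⟨min δ (m / 2), by positivity, min_le_left _ _, fun j hj => ?_⟩
      calc min δ (m / 2) ≤ m / 2 := min_le_right _ _
        _ < m := by linarith
        _ ≤ dist (x i) (x j) := Finset.inf'_le _ (Finset.mem_erase.mpr ⟨hj, Finset.mem_univ j⟩)
    · exact ⟨δ, hδpos, le_refl δ, fun j hj =>
        absurd (Finset.mem_erase.mpr ⟨hj, Finset.mem_univ j⟩) (fun h => hs ⟨j, h⟩)⟩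
  set v : EuclideanSpace ℝ (Fin d) := EuclideanSpace.single ⟨0, by omega⟩ (1 : ℝ) with hv
  have hvnorm : ‖v‖ = 1 := by rw [hv, EuclideanSpace.norm_single]; simp
  set p : ℝ → EuclideanSpace ℝ (Fin d) := fun t => x i + t • v with hp
  have hpdist : ∀ t : ℝ, ‖p t - x i‖ = |t| := by
    intro t
    rw [hp]
    simp [norm_smul, hvnorm]
  have hpΩ : ∀ t : ℝ, |t| < r → p t ∈ Ω := by
    intro t ht
    apply hball
    rw [Metric.mem_ball, dist_eq_norm, hpdist t]
    exact lt_of_lt_of_le ht hrδ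
  have hpne : ∀ t : ℝ, |t| < r → ∀ j, j ≠ i → p t - x j ≠ 0 := by
    intro t ht j hj hcon
    have h1 : dist (x i) (x j) ≤ dist (x i) (p t) + dist (p t) (x j) := dist_triangle _ _ _
    have h2 : dist (p t) (x j) = 0 := by
      rw [dist_eq_norm, hcon]; simp
    have h3 : dist (x i) (p t) = |t| := by rw [dist_comm, dist_eq_norm, hpdist]
    have := hrd j hj
    rw [h2, h3] at h1
    linarith
  set G : ℝ → ℝ := fun t => c i * t ^ ν +
    ∑ j ∈ Finset.univ.erase i, c j * ‖p t - x j‖ ^ ν with hG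
  have hsplit : ∀ t : ℝ, |t| < r →
      c i * |t| ^ ν + ∑ j ∈ Finset.univ.erase i, c j * ‖p t - x j‖ ^ ν = 0 := by
    intro t ht
    have h0 := hc (p t) (hpΩ t ht)
    rw [← Finset.add_sum_erase _ _ (Finset.mem_univ i), hpdist t] at h0
    exact h0
  have hGpos : ∀ t ∈ Set.Ioo (0:ℝ) r, G t = 0 := by
    intro t ht
    have := hsplit t (by rw [abs_of_pos ht.1]; exact ht.2)
    rw [abs_of_pos ht.1] at this
    exact this
  have hGanal : AnalyticOnNhd ℝ G (Set.Ioo (-r) r) := by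
    intro t ht
    have habs : |t| < r := abs_lt.mpr ⟨ht.1, ht.2⟩
    apply AnalyticAt.add
    · exact analyticAt_const.mul ((analyticAt_id).pow ν)
    · apply Finset.analyticAt_fun_sum
      intro j hj
      have hjne : j ≠ i := (Finset.mem_erase.mp hj).1
      have haff : AnalyticAt ℝ (fun s : ℝ => p s - x j) t := by
        have h1 : AnalyticAt ℝ (fun s : ℝ => s • v) t := by
          apply ((ContinuousLinearMap.toSpanSingleton ℝ v).analyticAt t).congr
          filter_upwards with s
          simp [ContinuousLinearMap.toSpanSingleton_apply]
        have := (analyticAt_const (v := x i - x j)).add h1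
        apply this.congr
        filter_upwards with s
        show (x i - x j) + s • v = p s - x j
        rw [hp]
        module
      have hcomp := AnalyticAt.comp (f := fun s : ℝ => p s - x j) (x := t)
        (analyticAt_norm' (hpne t habs j hjne)) haff
      exact analyticAt_const.mul ((hcomp.congr (by filter_upwards with s; simp [Function.comp])).pow ν)
  have hEq : Set.EqOn G 0 (Set.Ioo (-r) r) := by
    apply hGanal.eqOn_zero_of_preconnected_of_eventuallyEq_zero isPreconnected_Ioo
      (z₀ := r / 2)
    · constructor <;> [linarith; linarith]
    · apply Filter.eventually_of_mem (isOpen_Ioo.mem_nhds (by constructor <;> [linarith; linarith] :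
        r / 2 ∈ Set.Ioo (0:ℝ) r))
      intro s hs
      exact hGpos s hs
  have hneg := hEq (x := -(r/2)) (by constructor <;> [linarith; linarith])
  have hsplitneg := hsplit (-(r/2)) (by rw [abs_of_neg (by linarith)]; linarith)
  rw [abs_of_neg (by linarith : -(r/2) < 0), neg_neg] at hsplitneg
  rw [hG] at hneg
  simp only [Pi.zero_apply] at hneg
  have hodd : (-(r/2:ℝ)) ^ ν = -((r/2:ℝ) ^ ν) := Odd.neg_pow hν _
  have hrν : (0:ℝ) < (r/2) ^ ν := by positivity
  rw [hodd] at hneg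
  have hA : c i * (r/2)^ν = 0 := by linear_combination (hsplitneg - hneg) / 2
  rcases mul_eq_zero.mp hA with h | h
  · exact h
  · exact absurd h (ne_of_gt hrν)
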